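/- If M is a subgroup of a finite group G, then M equals the intersection over all primes p dividing |G| of the subgroups M·O_{p'}(G). -/

import Mathlib

lemma relindex_sup_dvd_card {G : Type*} [Group G] [Finite G] (M N : Subgroup G) (hN : N.Normal) :
    M.relIndex (M ⊔ N) ∣ Nat.card N := by
  have hM : M ≤ M ⊔ N := le_sup_left
  have hNle : N ≤ M ⊔ N := le_sup_right
  have h1 : M.relIndex (M ⊔ N) * Nat.card M = Nat.card (M ⊔ N : Subgroup G) := by
    have := (M.subgroupOf (M ⊔ N)).card_mul_index
    rwa [Nat.card_congr (Subgroup.subgroupOfEquivOfLe hM).toEquiv, mul_comm] at this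
  have h2 : N.relIndex M * Nat.card N = Nat.card (M ⊔ N : Subgroup G) := by
    have := (N.subgroupOf (M ⊔ N)).card_mul_index
    rw [Nat.card_congr (Subgroup.subgroupOfEquivOfLe hNle).toEquiv, mul_comm] at this
    rwa [← Subgroup.relIndex, Subgroup.relIndex_sup_right] at this
  have h3 : N.relIndex M ∣ Nat.card M := Subgroup.index_dvd_card (N.subgroupOf M)
  obtain ⟨k, hk⟩ := h3
  have hr : N.relIndex M ≠ 0 := Subgroup.index_ne_zero_of_finite
  refine ⟨k, ?_⟩
  have : N.relIndex M * Nat.card N = N.relIndex M * (M.relIndex (M ⊔ N) * k) := by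
    rw [h2, ← h1, hk]; ring
  exact Nat.eq_of_mul_eq_mul_left (Nat.pos_of_ne_zero hr) this

/-- `O` is the `p'`-core of `G`: the largest normal subgroup of `G`
whose order is coprime to `p`. -/
def IsPPrimeCore (p : ℕ) {G : Type*} [Group G] (O : Subgroup G) : Prop :=
  O.Normal ∧ Nat.Coprime p (Nat.card O) ∧
    ∀ N : Subgroup G, N.Normal → Nat.Coprime p (Nat.card N) → N ≤ O

/-- If `M` is a subgroup of a finite group `G`, then `M` equals the intersection
over all primes `p` dividing `|G|` of the subgroups `M·O_{p'}(G)`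
(which equal `M ⊔ O_{p'}(G)` since `O_{p'}(G)` is normal). -/
theorem subgroup_eq_iInf_mul_pPrimeCore {G : Type*} [Group G] [Finite G]
    (M : Subgroup G) (O : ℕ → Subgroup G)
    (hO : ∀ p ∈ (Nat.card G).primeFactors, IsPPrimeCore p (O p)) :
    M = ⨅ p ∈ (Nat.card G).primeFactors, M ⊔ O p := by
  set H : Subgroup G := ⨅ p ∈ (Nat.card G).primeFactors, M ⊔ O p with hH
  have hle : M ≤ H := le_iInf fun p => le_iInf fun _ => le_sup_left
  refine le_antisymm hle (Subgroup.relIndex_eq_one.mp ?_)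
  by_contra hne
  have hcard : Nat.card G ≠ 0 := Nat.card_pos.ne'
  have hdvd : M.relIndex H ∣ Nat.card G :=
    (Subgroup.relIndex_dvd_index_of_le hle).trans M.index_dvd_card
  obtain ⟨p, hp, hpd⟩ := Nat.exists_prime_and_dvd hne
  have hpG : p ∈ (Nat.card G).primeFactors :=
    Nat.mem_primeFactors.mpr ⟨hp, hpd.trans hdvd, hcard⟩
  obtain ⟨hnorm, hcop, -⟩ := hO p hpG
  have hHle : H ≤ M ⊔ O p := iInf₂_le p hpG
  have h1 : M.relIndex H ∣ M.relIndex (M ⊔ O p) :=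
    Dvd.intro _ (Subgroup.relIndex_mul_relIndex M H (M ⊔ O p) hle hHle)
  have h2 : M.relIndex (M ⊔ O p) ∣ Nat.card (O p) := relindex_sup_dvd_card M (O p) hnorm
  exact hp.ne_one (Nat.eq_one_of_dvd_coprimes hcop dvd_rfl (hpd.trans (h1.trans h2)))
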